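/- For every natural number k ≥ 1 and every n, if there exists a balanced weighing scheme for n coins using k weighings that identifies the counterfeit, then n ≤ (3 ^ k - 3) / 2. -/

import Mathlib

/-- A weighing scheme: every entry lies in {-1, 0, 1}. -/
def IsScheme {k n : ℕ} (M : Fin k → Fin n → ℤ) : Prop :=
  ∀ j i, M j i ∈ ({-1, 0, 1} : Set ℤ)

/-- A scheme is balanced: each weighing puts equally many coins on each pan. -/
def IsBalanced {k n : ℕ} (M : Fin k → Fin n → ℤ) : Prop :=
  ∀ j, (Finset.univ.filter (fun i => M j i = 1)).card =
       (Finset.univ.filter (fun i => M j i = -1)).card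

/-- A counterfeit scenario: genuine weight `g`, counterfeit coin `c`, weights `w`. -/
def IsScenario {n : ℕ} (g : ℝ) (c : Fin n) (w : Fin n → ℝ) : Prop :=
  (∀ i, i ≠ c → w i = g) ∧ w c ≠ g

/-- The scheme identifies the counterfeit coin and its weight deviation. -/
def Identifies {k n : ℕ} (M : Fin k → Fin n → ℤ) : Prop :=
  ∀ (g : ℝ) (c : Fin n) (w : Fin n → ℝ) (g' : ℝ) (c' : Fin n) (w' : Fin n → ℝ),
    IsScenario g c w → IsScenario g' c' w' →
    (∀ j, Real.sign (∑ i, (M j i : ℝ) * w i) = Real.sign (∑ i, (M j i : ℝ) * w' i)) →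
    c = c' ∧ Real.sign (w c - g) = Real.sign (w' c' - g')

/-- For every k ≥ 1, any number of coins admitting an identifying balanced
weighing scheme with k weighings is at most (3 ^ k - 3) / 2. -/
theorem coins_le (k : ℕ) (hk : 1 ≤ k) (n : ℕ)
    (h : ∃ M : Fin k → Fin n → ℤ, IsScheme M ∧ IsBalanced M ∧ Identifies M) :
    n ≤ (3 ^ k - 3) / 2 := by
  obtain ⟨M, hS, hB, hI⟩ := h
  by_contra hn
  -- Key consequence of Identifies, using scenarios with g = 0.
  have key : ∀ (c c' : Fin n) (ε ε' : ℝ), ε ≠ 0 → ε' ≠ 0 →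
      (∀ j, Real.sign ((M j c : ℝ) * ε) = Real.sign ((M j c' : ℝ) * ε')) →
      c = c' ∧ Real.sign ε = Real.sign ε' := by
    intro c c' ε ε' hε hε' hsign
    have h1 : IsScenario 0 c (fun i => if i = c then ε else 0) := by
      refine ⟨fun i hi => by simp [hi], by simpa using hε⟩
    have h2 : IsScenario 0 c' (fun i => if i = c' then ε' else 0) := by
      refine ⟨fun i hi => by simp [hi], by simpa using hε'⟩
    have hout : ∀ (b : Fin n) (δ : ℝ) (j : Fin k),
        (∑ i, (M j i : ℝ) * (if i = b then δ else 0)) = (M j b : ℝ) * δ := by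
      intro b δ j
      rw [Finset.sum_eq_single b]
      · simp
      · intro i _ hi; simp [hi]
      · simp
    obtain ⟨hcc, hsg⟩ := hI 0 c _ 0 c' _ h1 h2 (by
      intro j; rw [hout c ε j, hout c' ε' j]; exact hsign j)
    refine ⟨hcc, ?_⟩
    simpa using hsg
  -- the column map
  set f : Fin n → (Fin k → ℤ) := fun i j => M j i with hf
  have hinj : Function.Injective f := by
    intro c c' hcc
    refine (key c c' 1 1 one_ne_zero one_ne_zero ?_).1
    intro j
    have : M j c = M j c' := congrFun hcc j
    rw [this]
  have hneg : ∀ c c', f c ≠ -f c' := by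
    intro c c' hcon
    have hsign : ∀ j, Real.sign ((M j c : ℝ) * 1) = Real.sign ((M j c' : ℝ) * (-1)) := by
      intro j
      have : M j c = -(M j c') := congrFun hcon j
      rw [this]; push_cast; ring_nf
    have := (key c c' 1 (-1) one_ne_zero (by norm_num) hsign).2
    rw [Real.sign_one] at this
    have h2 : Real.sign (-1 : ℝ) = -1 := Real.sign_of_neg (by norm_num)
    rw [h2] at this
    norm_num at this
  have hf0 : ∀ i, f i ≠ 0 := by
    intro i hi
    exact hneg i i (by rw [hi]; simp)
  -- the ambient finset
  set T : Finset ℤ := {-1, 0, 1} with hT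
  set P : Finset (Fin k → ℤ) := Fintype.piFinset (fun _ : Fin k => T) with hP
  have hmemT : ∀ j i, M j i ∈ T := by
    intro j i
    have := hS j i
    simp only [Set.mem_insert_iff, Set.mem_singleton_iff] at this
    simp [hT]
    tauto
  have hfP : ∀ i, f i ∈ P := by
    intro i
    rw [hP, Fintype.mem_piFinset]
    intro j
    exact hmemT j i
  have hnfP : ∀ i, -f i ∈ P := by
    intro i
    rw [hP, Fintype.mem_piFinset]
    intro j
    have := hmemT j i
    simp only [hT, Finset.mem_insert, Finset.mem_singleton] at this ⊢
    have : f i j = -1 ∨ f i j = 0 ∨ f i j = 1 := this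
    rcases this with h | h | h <;> simp [h]
  set A : Finset (Fin k → ℤ) := Finset.image f Finset.univ with hA
  set B : Finset (Fin k → ℤ) := Finset.image (fun i => -f i) Finset.univ with hB'
  have hinjB : Function.Injective (fun i => -f i) := fun a b hab =>
    hinj (neg_injective hab)
  have hcardA : A.card = n := by
    rw [hA, Finset.card_image_of_injective _ hinj, Finset.card_univ, Fintype.card_fin]
  have hcardB : B.card = n := by
    rw [hB', Finset.card_image_of_injective _ hinjB, Finset.card_univ, Fintype.card_fin]
  have hdisj : Disjoint A B := by
    rw [Finset.disjoint_left]
    intro v hvA hvB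
    rw [hA, Finset.mem_image] at hvA
    rw [hB', Finset.mem_image] at hvB
    obtain ⟨c, _, hc⟩ := hvA
    obtain ⟨c', _, hc'⟩ := hvB
    exact hneg c c' (by rw [hc, ← hc'])
  have hsub : A ∪ B ⊆ P.erase 0 := by
    intro v hv
    rw [Finset.mem_union] at hv
    rw [Finset.mem_erase]
    rcases hv with hv | hv
    · rw [hA, Finset.mem_image] at hv
      obtain ⟨i, _, hi⟩ := hv
      exact ⟨by rw [← hi]; exact hf0 i, by rw [← hi]; exact hfP i⟩
    · rw [hB', Finset.mem_image] at hv
      obtain ⟨i, _, hi⟩ := hv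
      refine ⟨by rw [← hi]; simpa using hf0 i, by rw [← hi]; exact hnfP i⟩
  have hcardT : T.card = 3 := by decide
  have hcardP : P.card = 3 ^ k := by
    rw [hP, Fintype.card_piFinset]
    simp [hcardT]
  have h0P : (0 : Fin k → ℤ) ∈ P := by
    rw [hP, Fintype.mem_piFinset]
    intro j; simp [hT]
  have hcardE : (P.erase 0).card = 3 ^ k - 1 := by
    rw [Finset.card_erase_of_mem h0P, hcardP]
  have hcardAB : (A ∪ B).card = 2 * n := by
    rw [Finset.card_union_of_disjoint hdisj, hcardA, hcardB]; ring
  have hle : 2 * n ≤ 3 ^ k - 1 := by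
    rw [← hcardAB, ← hcardE]
    exact Finset.card_le_card hsub
  have h3k : 3 ≤ 3 ^ k := by
    calc (3 : ℕ) = 3 ^ 1 := by norm_num
    _ ≤ 3 ^ k := Nat.pow_le_pow_right (by norm_num) hk
  have hodd : 3 ^ k % 2 = 1 := by
    rw [Nat.pow_mod]; norm_num
  have heq : 2 * n = 3 ^ k - 1 := by omega
  -- equality of finsets
  have hABeq : A ∪ B = P.erase 0 := by
    apply Finset.eq_of_subset_of_card_le hsub
    rw [hcardAB, hcardE]
    omega
  -- the distinguished weighing
  set j : Fin k := ⟨0, by omega⟩ with hj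
  -- total absolute sum over all vectors
  have hsumP : ∑ v ∈ P, |v j| = 2 * 3 ^ (k - 1) := by
    have hps := Finset.prod_univ_sum (fun _ : Fin k => T)
      (fun i x => if i = j then |x| else 1)
    have h1 : ∀ p : Fin k → ℤ, (∏ i, if i = j then |p i| else 1) = |p j| := by
      intro p
      rw [Finset.prod_ite_eq' Finset.univ j (fun i => |p i|)]
      simp
    have h2 : (∏ i : Fin k, ∑ x ∈ T, if i = j then |x| else 1) = 2 * 3 ^ (k - 1) := by
      rw [← Finset.mul_prod_erase Finset.univ _ (Finset.mem_univ j)]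
      have hx1 : (∑ x ∈ T, if j = j then |x| else 1) = 2 := by simp [hT]
      have hx2 : ∀ i ∈ Finset.univ.erase j, (∑ x ∈ T, if i = j then |x| else 1) = 3 := by
        intro i hi
        have : i ≠ j := (Finset.mem_erase.mp hi).1
        simp [this, hcardT]
      rw [hx1, Finset.prod_congr rfl hx2, Finset.prod_const,
        Finset.card_erase_of_mem (Finset.mem_univ j), Finset.card_univ, Fintype.card_fin]
    calc ∑ v ∈ P, |v j| = ∑ p ∈ P, ∏ i, (if i = j then |p i| else 1) := by
          exact Finset.sum_congr rfl (fun p _ => (h1 p).symm)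
    _ = ∏ i : Fin k, ∑ x ∈ T, (if i = j then |x| else 1) := by rw [hps]
    _ = 2 * 3 ^ (k - 1) := h2
  have hsumE : ∑ v ∈ P.erase 0, |v j| = 2 * 3 ^ (k - 1) := by
    rw [Finset.sum_erase P (by simp)]
    exact hsumP
  have hsumAB : ∑ v ∈ A ∪ B, |v j| = 2 * ∑ i, |M j i| := by
    rw [Finset.sum_union hdisj, hA, hB',
      Finset.sum_image (fun a _ b _ hab => hinj hab),
      Finset.sum_image (fun a _ b _ hab => hinjB hab)]
    simp only [Pi.neg_apply, abs_neg]
    ring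
  have hcol : ∑ i, |M j i| = 3 ^ (k - 1) := by
    have : 2 * ∑ i, |M j i| = 2 * 3 ^ (k - 1) := by
      rw [← hsumAB, hABeq, hsumE]
    exact mul_left_cancel₀ two_ne_zero this
  -- row sum is zero
  have hrow : ∑ i, M j i = 0 := by
    have hsplit : ∀ i : Fin n, M j i =
        (if M j i = 1 then (1 : ℤ) else 0) - (if M j i = -1 then 1 else 0) := by
      intro i
      have := hS j i
      simp only [Set.mem_insert_iff, Set.mem_singleton_iff] at this
      rcases this with h | h | h <;> simp [h]
    calc ∑ i, M j i
        = ∑ i, ((if M j i = 1 then (1 : ℤ) else 0) - (if M j i = -1 then 1 else 0)) :=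
          Finset.sum_congr rfl (fun i _ => hsplit i)
    _ = (∑ i, if M j i = 1 then (1 : ℤ) else 0) - ∑ i, (if M j i = -1 then (1 : ℤ) else 0) :=
          Finset.sum_sub_distrib _ _
    _ = ((Finset.univ.filter (fun i => M j i = 1)).card : ℤ)
        - ((Finset.univ.filter (fun i => M j i = -1)).card : ℤ) := by
          rw [Finset.sum_boole, Finset.sum_boole]
    _ = 0 := by rw [hB j]; ring
  -- parity contradiction
  have hdvd : (2 : ℤ) ∣ ∑ i, |M j i| := by
    have : ∑ i, |M j i| = ∑ i, (|M j i| - M j i) := by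
      rw [Finset.sum_sub_distrib, hrow]; ring
    rw [this]
    apply Finset.dvd_sum
    intro i _
    have := hS j i
    simp only [Set.mem_insert_iff, Set.mem_singleton_iff] at this
    rcases this with h | h | h <;> simp [h]
  rw [hcol] at hdvd
  have hodd' : Odd ((3 : ℤ) ^ (k - 1)) := Odd.pow (by decide)
  exact (Int.not_odd_iff_even.mpr (even_iff_two_dvd.mpr hdvd)) hodd'
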